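/- Let (X, μ) be a measure space, let s : ℝ × X → ℝ be measurable, and let e_K, e_P : ℝ × X → ℝ be such that for each t ∈ ℝ the functions e_K(t,·) and e_P(t,·) are nonnegative, measurable and integrable with respect to μ. Suppose F ∈ L²(ℝ) satisfies: (1) for every λ ∈ ℝ, lim_{T→∞} ∫_{{x : s(T,x) ≤ λ}} e_K(T,x) dμ(x) = lim_{T→∞} ∫_{{x : s(T,x) ≤ λ}} e_P(T,x) dμ(x) = (1/2)∫_{(-∞,λ]} |F(σ)|² dσ; and (2) for every t ∈ ℝ, ∫_X (e_K(t,x) + e_P(t,x)) dμ(x) = ∫_ℝ |F(σ)|² dσ. Then lim_{T→∞} ∫_X e_K(T,x) dμ(x) = lim_{T→∞} ∫_X e_P(T,x) dμ(x) = (1/2)∫_ℝ |F(σ)|² dσ. -/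

import Mathlib

open MeasureTheory Filter Topology

lemma aux_half {X : Type*} [MeasurableSpace X] (μ : Measure X)
    (s a b : ℝ × X → ℝ) (E : ℝ) (L : ℝ → ℝ)
    (hanonneg : ∀ t x, 0 ≤ a (t, x)) (hbnonneg : ∀ t x, 0 ≤ b (t, x))
    (haint : ∀ t, Integrable (fun x => a (t, x)) μ)
    (hbint : ∀ t, Integrable (fun x => b (t, x)) μ)
    (hla : ∀ lam : ℝ, Tendsto (fun T => ∫ x in {x | s (T, x) ≤ lam}, a (T, x) ∂μ) atTop (𝓝 (L lam)))
    (hlb : ∀ lam : ℝ, Tendsto (fun T => ∫ x in {x | s (T, x) ≤ lam}, b (T, x) ∂μ) atTop (𝓝 (L lam)))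
    (hL : Tendsto L atTop (𝓝 (E / 2)))
    (hsum : ∀ t : ℝ, (∫ x, a (t, x) ∂μ) + (∫ x, b (t, x) ∂μ) = E) :
    Tendsto (fun T => ∫ x, a (T, x) ∂μ) atTop (𝓝 (E / 2)) := by
  rw [Metric.tendsto_atTop]
  intro ε hε
  obtain ⟨lam, hlam⟩ := (Metric.tendsto_atTop.1 hL (ε / 4) (by linarith)).imp
    (fun lam h => h lam le_rfl)
  rw [Real.dist_eq] at hlam
  have hLlam : E / 2 - ε / 4 ≤ L lam := by
    cases abs_lt.1 hlam with
    | intro h1 h2 => linarith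
  have ha' := Metric.tendsto_atTop.1 (hla lam) (ε / 4) (by linarith)
  have hb' := Metric.tendsto_atTop.1 (hlb lam) (ε / 4) (by linarith)
  obtain ⟨Na, hNa⟩ := ha'
  obtain ⟨Nb, hNb⟩ := hb'
  refine ⟨max Na Nb, fun T hT => ?_⟩
  have hTa := hNa T (le_trans (le_max_left _ _) hT)
  have hTb := hNb T (le_trans (le_max_right _ _) hT)
  rw [Real.dist_eq] at hTa hTb ⊢
  have hsa : (∫ x in {x | s (T, x) ≤ lam}, a (T, x) ∂μ) ≤ ∫ x, a (T, x) ∂μ :=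
    setIntegral_le_integral (haint T) (Filter.Eventually.of_forall fun x => hanonneg T x)
  have hsb : (∫ x in {x | s (T, x) ≤ lam}, b (T, x) ∂μ) ≤ ∫ x, b (T, x) ∂μ :=
    setIntegral_le_integral (hbint T) (Filter.Eventually.of_forall fun x => hbnonneg T x)
  have h1 := abs_lt.1 hTa
  have h2 := abs_lt.1 hTb
  have hsumT := hsum T
  rw [abs_lt]
  constructor <;> [linarith [h1.1]; linarith [h2.1]]

theorem total_energies_tendsto_half
    {X : Type*} [MeasurableSpace X] (μ : Measure X)
    (s eK eP : ℝ × X → ℝ) (F : ℝ → ℝ)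
    (hs : Measurable s)
    (heKmeas : ∀ t : ℝ, Measurable fun x => eK (t, x))
    (hePmeas : ∀ t : ℝ, Measurable fun x => eP (t, x))
    (heKnonneg : ∀ t : ℝ, ∀ x : X, 0 ≤ eK (t, x))
    (hePnonneg : ∀ t : ℝ, ∀ x : X, 0 ≤ eP (t, x))
    (heKint : ∀ t : ℝ, Integrable (fun x => eK (t, x)) μ)
    (hePint : ∀ t : ℝ, Integrable (fun x => eP (t, x)) μ)
    (hF : MemLp F 2 (volume : Measure ℝ))
    (hcond1K : ∀ lam : ℝ,
      Tendsto (fun T => ∫ x in {x | s (T, x) ≤ lam}, eK (T, x) ∂μ) atTop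
        (𝓝 ((1 / 2) * ∫ σ in Set.Iic lam, |F σ| ^ 2)))
    (hcond1P : ∀ lam : ℝ,
      Tendsto (fun T => ∫ x in {x | s (T, x) ≤ lam}, eP (T, x) ∂μ) atTop
        (𝓝 ((1 / 2) * ∫ σ in Set.Iic lam, |F σ| ^ 2)))
    (hcond2 : ∀ t : ℝ, ∫ x, (eK (t, x) + eP (t, x)) ∂μ = ∫ σ : ℝ, |F σ| ^ 2) :
    Tendsto (fun T => ∫ x, eK (T, x) ∂μ) atTop (𝓝 ((1 / 2) * ∫ σ : ℝ, |F σ| ^ 2)) ∧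
    Tendsto (fun T => ∫ x, eP (T, x) ∂μ) atTop (𝓝 ((1 / 2) * ∫ σ : ℝ, |F σ| ^ 2)) := by
  set E : ℝ := ∫ σ : ℝ, |F σ| ^ 2 with hE
  have hFint : Integrable (fun σ => |F σ| ^ 2) (volume : Measure ℝ) := by
    have := hF.integrable_sq
    simpa [sq_abs] using this
  have hL : Tendsto (fun lam => (1 / 2 : ℝ) * ∫ σ in Set.Iic lam, |F σ| ^ 2) atTop
      (𝓝 (E / 2)) := by
    have hcov : ∀ lam : ℝ, True := fun _ => trivial
    have h := (MeasureTheory.aecover_Iic (μ := (volume : Measure ℝ))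
      (l := atTop) (b := fun lam : ℝ => lam) tendsto_id).integral_tendsto_of_countably_generated
      hFint
    have : Tendsto (fun lam : ℝ => ∫ σ in Set.Iic lam, |F σ| ^ 2) atTop (𝓝 E) := h
    have := this.const_mul (1 / 2 : ℝ)
    simpa [div_eq_mul_inv, mul_comm] using this
  have hsum : ∀ t : ℝ, (∫ x, eK (t, x) ∂μ) + (∫ x, eP (t, x) ∂μ) = E := by
    intro t
    rw [← integral_add (heKint t) (hePint t)]
    exact hcond2 t
  have hE2 : (1 / 2 : ℝ) * E = E / 2 := by ring
  constructor
  · rw [hE2]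
    exact aux_half μ s eK eP E _ heKnonneg hePnonneg heKint hePint hcond1K hcond1P hL hsum
  · rw [hE2]
    exact aux_half μ s eP eK E _ hePnonneg heKnonneg hePint heKint hcond1P hcond1K hL
      (fun t => by rw [add_comm]; exact hsum t)
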